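/- Let G be a group and C ⊆ G a normal cone whose induced relation ≥ is a partial order. If f, g and h are dominants, then γ(f,h) ≤ γ(f,g)·γ(g,h). -/
import Mathlib


open Filter

/-- A subset `C` of a group is a *normal cone* if it contains `1`, is closed under
multiplication, and is invariant under conjugation. -/
def IsNormalCone {G : Type*} [Group G] (C : Set G) : Prop :=
  (1 : G) ∈ C ∧ (∀ f g : G, f ∈ C → g ∈ C → f * g ∈ C) ∧
    (∀ f h : G, f ∈ C → h * f * h⁻¹ ∈ C)

/-- The relation `f ≥ g` induced by the cone `C`: `f * g⁻¹ ∈ C`. -/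
def ConeGe {G : Type*} [Group G] (C : Set G) (f g : G) : Prop := f * g⁻¹ ∈ C

/-- `f` is a *dominant*: it lies in the cone, is not `1`, and some power of `f`
dominates any given element. -/
def IsDominant {G : Type*} [Group G] (C : Set G) (f : G) : Prop :=
  f ∈ C ∧ f ≠ 1 ∧ ∀ g : G, ∃ p : ℕ, ConeGe C (f ^ p) g

/-- `γ_k(f,g) = inf { p ∈ ℤ | f^p ≥ g^k }`. -/
noncomputable def gammaK {G : Type*} [Group G] (C : Set G) (f g : G) (k : ℕ) : ℤ :=
  sInf {p : ℤ | ConeGe C (f ^ p) (g ^ k)}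

section Aux

variable {G : Type*} [Group G] {C : Set G}

lemma coneGe_trans (hC : IsNormalCone C) {a b c : G} (h1 : ConeGe C a b) (h2 : ConeGe C b c) :
    ConeGe C a c := by
  have key : (a * b⁻¹) * (b * c⁻¹) = a * c⁻¹ := by group
  have := hC.2.1 _ _ h1 h2
  rwa [key] at this

lemma cone_pow (hC : IsNormalCone C) {x : G} (hx : x ∈ C) : ∀ n : ℕ, x ^ n ∈ C
  | 0 => by simpa using hC.1
  | n + 1 => by rw [pow_succ]; exact hC.2.1 _ _ (cone_pow hC hx n) hx

lemma cone_zpow (hC : IsNormalCone C) {x : G} (hx : x ∈ C) {p : ℤ} (hp : 0 ≤ p) :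
    x ^ p ∈ C := by
  have : x ^ p = x ^ p.toNat := by
    rw [← zpow_natCast, Int.toNat_of_nonneg hp]
  rw [this]
  exact cone_pow hC hx _

lemma cone_pow_ne_one (hC : IsNormalCone C)
    (hanti : ∀ f g : G, ConeGe C f g → ConeGe C g f → f = g)
    {x : G} (hx : x ∈ C) (hx1 : x ≠ 1) {n : ℕ} (hn : 0 < n) : x ^ n ≠ 1 := by
  intro he
  apply hx1
  apply hanti x 1
  · simpa [ConeGe] using hx
  · have h1 : x ^ (n - 1) * x = 1 := by
      rw [← pow_succ, Nat.sub_add_cancel hn, he]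
    simp only [ConeGe, one_mul]
    rw [show (x : G)⁻¹ = x ^ (n - 1) from (eq_inv_of_mul_eq_one_left h1).symm]
    exact cone_pow hC hx _

lemma one_le_of_mem (hC : IsNormalCone C)
    (hanti : ∀ f g : G, ConeGe C f g → ConeGe C g f → f = g)
    {f g : G} (hf : IsDominant C f) (hg : IsDominant C g)
    {k : ℕ} (hk : 0 < k) {p : ℤ} (hp : ConeGe C (f ^ p) (g ^ k)) : 1 ≤ p := by
  by_contra hlt
  have hp0 : p ≤ 0 := by omega
  have hgk : g ^ k ∈ C := cone_pow hC hg.1 k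
  have hfp : f ^ p ∈ C := by
    have := hC.2.1 _ _ hp hgk
    rwa [inv_mul_cancel_right] at this
  have hfpn : f ^ (-p) ∈ C := cone_zpow hC hf.1 (by omega)
  have hone : f ^ p = 1 := by
    apply hanti (f ^ p) 1
    · simpa [ConeGe] using hfp
    · simpa [ConeGe, ← zpow_neg] using hfpn
  rcases eq_or_lt_of_le hp0 with h | h
  · -- p = 0 : then 1 ≥ g^k and g^k ≥ 1, so g^k = 1, contradiction
    subst h
    have hgk1 : g ^ k = 1 := by
      apply hanti (g ^ k) 1
      · simpa [ConeGe] using hgk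
      · simpa [ConeGe, hone] using hp
    exact cone_pow_ne_one hC hanti hg.1 hg.2.1 hk hgk1
  · -- p < 0 : f^(-p) = 1 with -p > 0, contradiction
    have : f ^ (-p).toNat = 1 := by
      have : f ^ (-p) = 1 := by
        rw [zpow_neg, hone, inv_one]
      rwa [← zpow_natCast, Int.toNat_of_nonneg (by omega : (0:ℤ) ≤ -p)]
    exact cone_pow_ne_one hC hanti hf.1 hf.2.1 (by omega) this

lemma gammaK_spec (hC : IsNormalCone C)
    (hanti : ∀ f g : G, ConeGe C f g → ConeGe C g f → f = g)
    {f g : G} (hf : IsDominant C f) (hg : IsDominant C g) {k : ℕ} (hk : 0 < k) :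
    ConeGe C (f ^ gammaK C f g k) (g ^ k) ∧ 1 ≤ gammaK C f g k ∧
      ∀ p : ℤ, ConeGe C (f ^ p) (g ^ k) → gammaK C f g k ≤ p := by
  set S : Set ℤ := {p : ℤ | ConeGe C (f ^ p) (g ^ k)} with hS
  have hne : S.Nonempty := by
    obtain ⟨p, hp⟩ := hf.2.2 (g ^ k)
    exact ⟨(p : ℤ), by simpa [hS, zpow_natCast] using hp⟩
  have hbdd : BddBelow S := ⟨1, fun p hp => one_le_of_mem hC hanti hf hg hk hp⟩
  have hmem : sInf S ∈ S := Int.csInf_mem hne hbdd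
  exact ⟨hmem, one_le_of_mem hC hanti hf hg hk hmem,
    fun p hp => csInf_le hbdd hp⟩

end Aux

/-- For dominants `f, g, h` one has `γ(f,h) ≤ γ(f,g) * γ(g,h)`. -/
theorem statement8 {G : Type*} [Group G] (C : Set G) (hC : IsNormalCone C)
    (hanti : ∀ f g : G, ConeGe C f g → ConeGe C g f → f = g)
    (f g h : G) (hf : IsDominant C f) (hg : IsDominant C g) (hh : IsDominant C h)
    (Lfg Lgh Lfh : ℝ)
    (hfg : Tendsto (fun k : ℕ => (gammaK C f g k : ℝ) / (k : ℝ)) atTop (nhds Lfg))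
    (hgh : Tendsto (fun k : ℕ => (gammaK C g h k : ℝ) / (k : ℝ)) atTop (nhds Lgh))
    (hfh : Tendsto (fun k : ℕ => (gammaK C f h k : ℝ) / (k : ℝ)) atTop (nhds Lfh)) :
    Lfh ≤ Lfg * Lgh := by
  -- limits are nonnegative
  have hLnonneg : ∀ (a b : G), IsDominant C a → IsDominant C b → ∀ L : ℝ,
      Tendsto (fun k : ℕ => (gammaK C a b k : ℝ) / (k : ℝ)) atTop (nhds L) → 0 ≤ L := by
    intro a b ha hb L hL
    refine ge_of_tendsto hL ?_
    filter_upwards [eventually_ge_atTop 1] with k hk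
    have := (gammaK_spec hC hanti ha hb (by omega : 0 < k)).2.1
    positivity
  have hLfg0 : 0 ≤ Lfg := hLnonneg f g hf hg Lfg hfg
  have hLgh0 : 0 ≤ Lgh := hLnonneg g h hg hh Lgh hgh
  -- key inequality: γ_k(f,h) ≤ γ_{m_k}(f,g) with m_k = (γ_k(g,h)).toNat
  have key : ∀ k : ℕ, 0 < k →
      gammaK C f h k ≤ gammaK C f g (gammaK C g h k).toNat := by
    intro k hk
    obtain ⟨hmem1, hpos1, _⟩ := gammaK_spec hC hanti hg hh hk
    set m : ℕ := (gammaK C g h k).toNat with hm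
    have hmpos : 0 < m := by omega
    obtain ⟨hmem2, _, _⟩ := gammaK_spec hC hanti hf hg hmpos
    obtain ⟨_, _, hle⟩ := gammaK_spec hC hanti hf hh hk
    apply hle
    refine coneGe_trans hC hmem2 ?_
    have : g ^ (m : ℤ) = g ^ gammaK C g h k := by
      rw [hm, Int.toNat_of_nonneg (by omega)]
    rwa [← zpow_natCast, this]
  -- ε-bound
  have main : ∀ ε : ℝ, 0 < ε → Lfh ≤ (Lfg + ε) * Lgh := by
    intro ε hε
    -- eventually γ_m(f,g) ≤ (Lfg+ε) m
    have hev : ∀ᶠ m : ℕ in atTop, (gammaK C f g m : ℝ) / m ≤ Lfg + ε :=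
      hfg.eventually (eventually_le_nhds (lt_add_of_pos_right _ hε))
    obtain ⟨M, hM⟩ := hev.exists_forall_of_atTop
    set B : ℝ := ∑ m ∈ Finset.range M, |(gammaK C f g m : ℝ)| with hB
    have hB0 : 0 ≤ B := Finset.sum_nonneg fun _ _ => abs_nonneg _
    have hbound : ∀ m : ℕ, 0 < m → (gammaK C f g m : ℝ) ≤ (Lfg + ε) * m + B := by
      intro m hm
      rcases le_or_gt M m with hMm | hMm
      · have h1 := hM m hMm
        have h2 : (gammaK C f g m : ℝ) ≤ (Lfg + ε) * m := by
          rw [div_le_iff₀ (by positivity : (0:ℝ) < (m:ℝ))] at h1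
          linarith
        linarith
      · have h1 : (gammaK C f g m : ℝ) ≤ B := by
          calc (gammaK C f g m : ℝ) ≤ |(gammaK C f g m : ℝ)| := le_abs_self _
          _ ≤ B := Finset.single_le_sum (f := fun i => |(gammaK C f g i : ℝ)|)
                (fun _ _ => abs_nonneg _) (Finset.mem_range.2 hMm)
        have h2 : (0:ℝ) ≤ (Lfg + ε) * m := by positivity
        linarith
    -- eventual inequality on sequences
    have hseq : ∀ᶠ k : ℕ in atTop,
        (gammaK C f h k : ℝ) / k ≤ (Lfg + ε) * ((gammaK C g h k : ℝ) / k) + B * (1 / k) := by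
      filter_upwards [eventually_ge_atTop 1] with k hk
      have hk0 : 0 < k := hk
      have hkR : (0:ℝ) < (k:ℝ) := by positivity
      obtain ⟨_, hpos1, _⟩ := gammaK_spec hC hanti hg hh hk0
      set m : ℕ := (gammaK C g h k).toNat with hm
      have hmpos : 0 < m := by omega
      have h1 : (gammaK C f h k : ℝ) ≤ (Lfg + ε) * m + B := by
        calc (gammaK C f h k : ℝ) ≤ (gammaK C f g m : ℝ) := by
              exact_mod_cast key k hk0
        _ ≤ (Lfg + ε) * m + B := hbound m hmpos
      have hmk : (m : ℝ) = (gammaK C g h k : ℝ) := by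
        rw [hm]; exact_mod_cast Int.toNat_of_nonneg (by omega)
      rw [hmk] at h1
      have h2 : (Lfg + ε) * ((gammaK C g h k : ℝ) / k) + B * (1 / k)
          = ((Lfg + ε) * (gammaK C g h k : ℝ) + B) / k := by ring
      rw [h2]
      exact div_le_div_of_nonneg_right h1 hkR.le
    -- pass to the limit
    have hrhs : Tendsto (fun k : ℕ =>
        (Lfg + ε) * ((gammaK C g h k : ℝ) / k) + B * (1 / k)) atTop
        (nhds ((Lfg + ε) * Lgh + B * 0)) := by
      exact (hgh.const_mul _).add ((tendsto_one_div_atTop_nhds_zero_nat).const_mul _)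
    rw [mul_zero, add_zero] at hrhs
    exact le_of_tendsto_of_tendsto hfh hrhs hseq
  -- conclude
  refine le_of_forall_pos_le_add fun η hη => ?_
  have hε : (0:ℝ) < η / (Lgh + 1) := by positivity
  have := main _ hε
  have h2 : (η / (Lgh + 1)) * Lgh ≤ η := by
    rw [div_mul_eq_mul_div, div_le_iff₀ (by linarith : (0:ℝ) < Lgh + 1)]
    nlinarith
  nlinarith
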